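/- If a B(2,1) graphon with parameters (a₊,a₋,b,c,d), all in (0,1), c ∈ (0,1), satisfies the Euler–Lagrange equation S₀'(g(x,y)) = α + 3β∫₀¹ g(x,z)g(y,z)dz for a.e. (x,y) with β > 0, then a₊ > a₋, and β = −2S₀''(u)/(3c(a₊−a₋)) for some u ∈ (a₋, a₊); hence β ≥ 8/(3c(a₊−a₋)). -/

import Mathlib

open MeasureTheory Real Set

noncomputable section

def I01 : Set ℝ := Set.Icc 0 1

def S0' (u : ℝ) : ℝ := Real.log ((1 - u) / u)

def S0'' (u : ℝ) : ℝ := -1 / (u * (1 - u))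

def pode3 (c x : ℝ) : ℕ := if x < c / 2 then 0 else if x < c then 1 else 2

def tripodal (aplus aminus b c d : ℝ) (x y : ℝ) : ℝ :=
  if pode3 c x = 2 ∧ pode3 c y = 2 then b
  else if pode3 c x = 2 ∨ pode3 c y = 2 then d
  else if pode3 c x = pode3 c y then aminus
  else aplus

lemma step_integral (c p q r : ℝ) (hc : c ∈ Set.Ioo (0:ℝ) 1) :
    ∫ z in I01, (if z < c/2 then p else if z < c then q else r)
      = c/2 * p + c/2 * q + (1-c) * r := by
  obtain ⟨hc0, hc1⟩ := hc
  have h2 : (0:ℝ) < c/2 := by linarith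
  have h3 : c/2 < c := by linarith
  have hsplit : I01 = Ico 0 (c/2) ∪ (Ico (c/2) c ∪ Icc c 1) := by
    rw [Set.Ico_union_Icc_eq_Icc h3.le hc1.le,
      Set.Ico_union_Icc_eq_Icc h2.le (by linarith : c/2 ≤ (1:ℝ))]
    rfl
  set f : ℝ → ℝ := fun z => if z < c/2 then p else if z < c then q else r with hf
  have e1 : ∀ z ∈ Ico (0:ℝ) (c/2), f z = p := by
    intro z hz; simp only [hf]; rw [if_pos hz.2]
  have e2 : ∀ z ∈ Ico (c/2) c, f z = q := by
    intro z hz; simp only [hf]; rw [if_neg (not_lt.2 hz.1), if_pos hz.2]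
  have e3 : ∀ z ∈ Icc c (1:ℝ), f z = r := by
    intro z hz
    simp only [hf]
    rw [if_neg (not_lt.2 (le_trans h3.le hz.1)), if_neg (not_lt.2 hz.1)]
  have i1 : IntegrableOn f (Ico 0 (c/2)) := by
    rw [integrableOn_congr_fun e1 measurableSet_Ico]
    exact integrableOn_const measure_Ico_lt_top.ne
  have i2 : IntegrableOn f (Ico (c/2) c) := by
    rw [integrableOn_congr_fun e2 measurableSet_Ico]
    exact integrableOn_const measure_Ico_lt_top.ne
  have i3 : IntegrableOn f (Icc c 1) := by
    rw [integrableOn_congr_fun e3 measurableSet_Icc]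
    exact integrableOn_const measure_Icc_lt_top.ne
  have d1 : Disjoint (Ico (0:ℝ) (c/2)) (Ico (c/2) c ∪ Icc c 1) := by
    rw [Set.disjoint_left]
    rintro z hz (hz' | hz')
    · exact absurd hz'.1 (not_le.2 hz.2)
    · exact absurd (le_trans h3.le hz'.1) (not_le.2 hz.2)
  have d2 : Disjoint (Ico (c/2) c) (Icc c (1:ℝ)) := by
    rw [Set.disjoint_left]
    intro z hz hz'
    exact absurd hz'.1 (not_le.2 hz.2)
  rw [hsplit, setIntegral_union d1 ((measurableSet_Ico.union measurableSet_Icc)) i1 (i2.union i3),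
    setIntegral_union d2 measurableSet_Icc i2 i3,
    setIntegral_congr_fun measurableSet_Ico e1,
    setIntegral_congr_fun measurableSet_Ico e2,
    setIntegral_congr_fun measurableSet_Icc e3,
    setIntegral_const, setIntegral_const, setIntegral_const,
    measureReal_def, measureReal_def, measureReal_def,
    Real.volume_Ico, Real.volume_Ico, Real.volume_Icc,
    ENNReal.toReal_ofReal (by linarith), ENNReal.toReal_ofReal (by linarith),
    ENNReal.toReal_ofReal (by linarith)]
  ring_nf

lemma S0'_hasDeriv {u : ℝ} (hu : u ∈ Set.Ioo (0:ℝ) 1) :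
    HasDerivAt S0' (S0'' u) u := by
  obtain ⟨h0, h1⟩ := hu
  have hu0 : u ≠ 0 := ne_of_gt h0
  have h1u : (1:ℝ) - u ≠ 0 := ne_of_gt (by linarith)
  have hq : HasDerivAt (fun u : ℝ => (1 - u) / u) ((-1 * u - (1 - u) * 1) / u ^ 2) u :=
    ((hasDerivAt_id u).const_sub 1).div (hasDerivAt_id u) hu0
  have hne : (1 - u) / u ≠ 0 := ne_of_gt (div_pos (by linarith) h0)
  have h := hq.log hne
  convert h using 1
  case e'_8 => rfl
  rw [S0'']
  field_simp
  ring

lemma S0'_anti {u v : ℝ} (hu : u ∈ Set.Ioo (0:ℝ) 1) (hv : v ∈ Set.Ioo (0:ℝ) 1)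
    (huv : u < v) : S0' v < S0' u := by
  obtain ⟨hu0, hu1⟩ := hu
  obtain ⟨hv0, hv1⟩ := hv
  apply Real.log_lt_log (div_pos (by linarith) hv0)
  rw [div_lt_div_iff₀ hv0 hu0]
  nlinarith

set_option maxHeartbeats 1000000 in
theorem euler_lagrange_forces_divergence (aplus aminus b c d α β : ℝ)
    (hap : aplus ∈ Set.Ioo (0:ℝ) 1) (ham : aminus ∈ Set.Ioo (0:ℝ) 1)
    (hb : b ∈ Set.Ioo (0:ℝ) 1) (hd : d ∈ Set.Ioo (0:ℝ) 1)
    (hc : c ∈ Set.Ioo (0:ℝ) 1) (hβ : 0 < β)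
    (hne : aplus ≠ aminus)
    (hEL : ∀ x ∈ I01, ∀ y ∈ I01,
      S0' (tripodal aplus aminus b c d x y)
        = α + 3 * β * ∫ z in I01,
            tripodal aplus aminus b c d x z * tripodal aplus aminus b c d y z) :
    aminus < aplus ∧
    (∃ u ∈ Set.Ioo aminus aplus, β = -2 * S0'' u / (3 * c * (aplus - aminus))) ∧
    β ≥ 8 / (3 * c * (aplus - aminus)) := by
  obtain ⟨hc0, hc1⟩ := hc
  have h2 : (0:ℝ) < c/2 := by linarith
  have h3 : c/2 < c := by linarith
  have hx0 : (0:ℝ) ∈ I01 := ⟨le_refl 0, by linarith⟩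
  have hxc : c/2 ∈ I01 := ⟨by linarith, by linarith⟩
  have hp0 : pode3 c 0 = 0 := by simp [pode3, h2]
  have hpc : pode3 c (c/2) = 1 := by simp [pode3, h3]
  -- pointwise values of tripodal
  have t00 : tripodal aplus aminus b c d 0 0 = aminus := by
    simp [tripodal, hp0]
  have t0c : tripodal aplus aminus b c d 0 (c/2) = aplus := by
    simp [tripodal, hp0, hpc]
  have hpz : ∀ z : ℝ, (z < c/2 → pode3 c z = 0) ∧ (c/2 ≤ z → z < c → pode3 c z = 1)
      ∧ (c ≤ z → pode3 c z = 2) := by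
    intro z
    refine ⟨fun h => by simp [pode3, h], fun h1 h2 => by simp [pode3, not_lt.2 h1, h2],
      fun h => by simp [pode3, not_lt.2 (le_trans h3.le h), not_lt.2 h]⟩
  have tg0 : ∀ z : ℝ, tripodal aplus aminus b c d 0 z
      = if z < c/2 then aminus else if z < c then aplus else d := by
    intro z
    rcases lt_or_ge z (c/2) with hz1 | hz1
    · simp [tripodal, hp0, (hpz z).1 hz1, hz1]
    · rcases lt_or_ge z c with hz2 | hz2
      · simp [tripodal, hp0, (hpz z).2.1 hz1 hz2, not_lt.2 hz1, hz2]
      · simp [tripodal, hp0, (hpz z).2.2 hz2, not_lt.2 hz1, not_lt.2 hz2]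
  have tgc : ∀ z : ℝ, tripodal aplus aminus b c d (c/2) z
      = if z < c/2 then aplus else if z < c then aminus else d := by
    intro z
    rcases lt_or_ge z (c/2) with hz1 | hz1
    · simp [tripodal, hpc, (hpz z).1 hz1, hz1]
    · rcases lt_or_ge z c with hz2 | hz2
      · simp [tripodal, hpc, (hpz z).2.1 hz1 hz2, not_lt.2 hz1, hz2]
      · simp [tripodal, hpc, (hpz z).2.2 hz2, not_lt.2 hz1, not_lt.2 hz2]
  have I1 : (∫ z in I01, tripodal aplus aminus b c d 0 z * tripodal aplus aminus b c d 0 z)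
      = c/2 * (aminus*aminus) + c/2 * (aplus*aplus) + (1-c) * (d*d) := by
    rw [← step_integral c (aminus*aminus) (aplus*aplus) (d*d) ⟨hc0, hc1⟩]
    apply setIntegral_congr_fun measurableSet_Icc
    intro z _
    simp only [tg0]
    by_cases hz1 : z < c/2
    · simp [hz1]
    · by_cases hz2 : z < c <;> simp [hz1, hz2]
  have I2 : (∫ z in I01, tripodal aplus aminus b c d 0 z * tripodal aplus aminus b c d (c/2) z)
      = c/2 * (aminus*aplus) + c/2 * (aplus*aminus) + (1-c) * (d*d) := by
    rw [← step_integral c (aminus*aplus) (aplus*aminus) (d*d) ⟨hc0, hc1⟩]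
    apply setIntegral_congr_fun measurableSet_Icc
    intro z _
    simp only [tg0, tgc]
    by_cases hz1 : z < c/2
    · simp [hz1]
    · by_cases hz2 : z < c <;> simp [hz1, hz2]
  have e1 := hEL 0 hx0 0 hx0
  have e2 := hEL 0 hx0 (c/2) hxc
  rw [t00, I1] at e1
  rw [t0c, I2] at e2
  have key : S0' aminus - S0' aplus = 3 * β * c / 2 * (aplus - aminus)^2 := by
    rw [e1, e2]; ring
  have hsq : 0 < (aplus - aminus)^2 := by
    rcases (sub_ne_zero.2 hne).lt_or_gt with h | h
    · nlinarith
    · nlinarith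
  have hdiffpos : 0 < 3 * β * c / 2 * (aplus - aminus)^2 :=
    mul_pos (by positivity) hsq
  have hlt : aminus < aplus := by
    by_contra h
    have h' : aplus < aminus := lt_of_le_of_ne (not_lt.1 h) hne
    have := S0'_anti hap ham h'
    linarith [key ▸ hdiffpos]
  refine ⟨hlt, ?_⟩
  -- MVT
  have hsub : Set.Icc aminus aplus ⊆ Set.Ioo (0:ℝ) 1 := fun x hx =>
    ⟨lt_of_lt_of_le ham.1 hx.1, lt_of_le_of_lt hx.2 hap.2⟩
  have hcont : ContinuousOn S0' (Set.Icc aminus aplus) := fun x hx =>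
    ((S0'_hasDeriv (hsub hx)).continuousAt).continuousWithinAt
  have hderiv : ∀ x ∈ Set.Ioo aminus aplus, HasDerivAt S0' (S0'' x) x := fun x hx =>
    S0'_hasDeriv (hsub ⟨hx.1.le, hx.2.le⟩)
  obtain ⟨u, hu, hueq⟩ := exists_hasDerivAt_eq_slope S0' S0'' hlt hcont hderiv
  have hdne : aplus - aminus ≠ 0 := by intro h; apply hne; linarith
  have hcne : c ≠ 0 := ne_of_gt hc0
  have hβeq : β = -2 * S0'' u / (3 * c * (aplus - aminus)) := by
    rw [hueq]
    have hval : S0' aplus - S0' aminus = -(3 * β * c / 2 * (aplus - aminus)^2) := by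
      linarith [key]
    rw [hval]
    field_simp
  refine ⟨⟨u, hu, hβeq⟩, ?_⟩
  -- bound
  have hu01 : u ∈ Set.Ioo (0:ℝ) 1 := hsub ⟨hu.1.le, hu.2.le⟩
  have huu : 0 < u * (1 - u) := by
    have := hu01.1; have := hu01.2; nlinarith
  have huu4 : u * (1 - u) ≤ 1/4 := by nlinarith [sq_nonneg (u - 1/2)]
  have hS : -2 * S0'' u ≥ 8 := by
    rw [S0'']
    rw [ge_iff_le, ← sub_nonneg]
    have : -2 * (-1 / (u * (1-u))) - 8 = (2 - 8 * (u*(1-u))) / (u*(1-u)) := by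
      have := left_ne_zero_of_mul huu.ne'; have := right_ne_zero_of_mul huu.ne'
      field_simp
    rw [this]
    apply div_nonneg _ huu.le
    linarith
  have hden : 0 < 3 * c * (aplus - aminus) := by
    have : 0 < aplus - aminus := by linarith
    positivity
  rw [hβeq, ge_iff_le, div_le_div_iff₀ hden hden]
  nlinarith [hS, hden]
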